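/- arXiv:2503.20292 — 2 statements merged into one kernel-verified Lean document; each statement's English description precedes it below -/
import Mathlib

section
/- Let C > 0, K > 0, T > 0, and let G : [0, T] → ℝ be continuous on [0,T], differentiable on (0, T], with lim sup_{t→0⁺} t·G(t) ≤ 0, and such that G'(t) ≤ C t⁻² - G(t)²/K² whenever G(t) > 0. Then t·G(t) ≤ (K² + √(K⁴ + 4CK²))/2 for all t ∈ (0, T]. -/
lemma quad_root_bound (C K x : ℝ) (hC : 0 < C) (hK : 0 < K)
    (h : x ^ 2 ≤ K ^ 2 * x + C * K ^ 2) :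
    x ≤ (K ^ 2 + Real.sqrt (K ^ 4 + 4 * C * K ^ 2)) / 2 := by
  set s := Real.sqrt (K ^ 4 + 4 * C * K ^ 2) with hs
  have hs2 : s ^ 2 = K ^ 4 + 4 * C * K ^ 2 := Real.sq_sqrt (by positivity)
  have hsnn : 0 ≤ s := Real.sqrt_nonneg _
  have hK2 : 0 < K ^ 2 := pow_pos hK 2
  have hsK : K ^ 2 < s := by nlinarith [mul_pos hC hK2]
  by_contra hx
  push_neg at hx
  have h1 : 0 < x - (K ^ 2 + s) / 2 := by linarith
  have h2 : 0 < x - (K ^ 2 - s) / 2 := by linarith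
  nlinarith [mul_pos h1 h2]

theorem stmt_13 (C K T : ℝ) (hC : 0 < C) (hK : 0 < K) (hT : 0 < T)
    (G G' : ℝ → ℝ) (hcont : ContinuousOn G (Set.Icc 0 T))
    (hderiv : ∀ t ∈ Set.Ioc 0 T, HasDerivAt G (G' t) t)
    (hineq : ∀ t ∈ Set.Ioc 0 T, 0 < G t → G' t ≤ C * t⁻¹ ^ 2 - (G t) ^ 2 / K ^ 2)
    (hlim : Filter.limsup (fun t => t * G t) (nhdsWithin 0 (Set.Ioi 0)) ≤ 0) :
    ∀ t ∈ Set.Ioc 0 T, t * G t ≤ (K ^ 2 + Real.sqrt (K ^ 4 + 4 * C * K ^ 2)) / 2 := by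
  by_contra hcon
  push_neg at hcon
  obtain ⟨t₁, ht₁, hMt₁⟩ := hcon
  set s := Real.sqrt (K ^ 4 + 4 * C * K ^ 2) with hs
  set M : ℝ := (K ^ 2 + s) / 2 with hMdef
  set M' : ℝ := (M + t₁ * G t₁) / 2 with hM'def
  have hs2 : s ^ 2 = K ^ 4 + 4 * C * K ^ 2 := Real.sq_sqrt (by positivity)
  have hsnn : 0 ≤ s := Real.sqrt_nonneg _
  have hK2 : 0 < K ^ 2 := pow_pos hK 2
  have hMpos : 0 < M := by simp only [hMdef]; linarith
  have hM'M : M < M' := by simp only [hM'def]; linarith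
  have hM'lt : M' < t₁ * G t₁ := by simp only [hM'def]; linarith
  have hM'pos : 0 < M' := lt_trans hMpos hM'M
  -- boundedness of t * G t near 0
  obtain ⟨B, hB⟩ := isCompact_Icc.exists_bound_of_continuousOn hcont
  have hbdd : Filter.IsBoundedUnder (· ≤ ·) (nhdsWithin 0 (Set.Ioi 0))
      (fun t => t * G t) := by
    refine ⟨T * (|B| + 1), ?_⟩
    rw [Filter.eventually_map]
    filter_upwards [Ioo_mem_nhdsGT_of_mem (Set.left_mem_Ico.mpr hT)] with t ht
    have h1 : |G t| ≤ B := by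
      have := hB t ⟨ht.1.le, ht.2.le⟩
      simpa using this
    have h2 : G t ≤ |B| + 1 := le_trans (le_abs_self _ |>.trans h1) (by
      have := le_abs_self B; linarith)
    have h3 : 0 ≤ |B| + 1 := by positivity
    calc t * G t ≤ t * (|B| + 1) := by nlinarith [ht.1.le]
      _ ≤ T * (|B| + 1) := by nlinarith [ht.2.le]
  have hev : ∀ᶠ t in nhdsWithin 0 (Set.Ioi 0), t * G t < M' :=
    Filter.eventually_lt_of_limsup_lt (lt_of_le_of_lt hlim hM'pos) hbdd
  obtain ⟨ε, hε0, hεsub⟩ := (nhdsGT_basis (0 : ℝ)).eventually_iff.mp hev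
  have hεt₁ : ε ≤ t₁ := by
    by_contra h
    push_neg at h
    exact absurd (hεsub ⟨ht₁.1, h⟩) (not_lt.mpr hM'lt.le)
  -- the set where φ ≥ M'
  set S : Set ℝ := {t | t ∈ Set.Icc (ε / 2) t₁ ∧ M' ≤ t * G t} with hSdef
  have hSne : S.Nonempty := ⟨t₁, ⟨by constructor <;> linarith, hM'lt.le⟩⟩
  have hsub : Set.Icc (ε / 2) t₁ ⊆ Set.Icc 0 T := fun x hx =>
    ⟨by linarith [hx.1], le_trans hx.2 ht₁.2⟩
  have hφcont : ContinuousOn (fun t => t * G t) (Set.Icc (ε / 2) t₁) :=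
    continuousOn_id.mul (hcont.mono hsub)
  have hSclosed : IsClosed S := by
    have hEq : S = Set.Icc (ε / 2) t₁ ∩ (fun t => t * G t) ⁻¹' Set.Ici M' := by
      ext x; simp [hSdef, Set.mem_Icc, and_assoc]
    rw [hEq]
    exact hφcont.preimage_isClosed_of_isClosed isClosed_Icc isClosed_Ici
  have hbb : BddBelow S := ⟨ε / 2, fun x hx => hx.1.1⟩
  set t₀ := sInf S with ht₀def
  have ht₀S : t₀ ∈ S := hSclosed.csInf_mem hSne hbb
  have ht₀pos : 0 < t₀ := lt_of_lt_of_le (by linarith) ht₀S.1.1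
  have ht₀t₁ : t₀ ≤ t₁ := ht₀S.1.2
  have ht₀T : t₀ ≤ T := le_trans ht₀t₁ ht₁.2
  have hφ₀ : M' ≤ t₀ * G t₀ := ht₀S.2
  have hGpos : 0 < G t₀ := by nlinarith
  have hless : ∀ t, 0 < t → t < t₀ → t * G t < M' := by
    intro t ht htt₀
    by_cases h : t < ε
    · exact hεsub ⟨ht, h⟩
    · push_neg at h
      by_contra hge
      push_neg at hge
      have hmem : t ∈ S := ⟨⟨by linarith, by linarith⟩, hge⟩
      exact absurd (csInf_le hbb hmem) (not_le.mpr htt₀)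
  -- derivative at t₀
  have hd : HasDerivAt (fun t => t * G t) (1 * G t₀ + t₀ * G' t₀) t₀ :=
    (hasDerivAt_id t₀).mul (hderiv t₀ ⟨ht₀pos, ht₀T⟩)
  have hdiff : Set.Iio t₀ \ {t₀} = Set.Iio t₀ := by
    apply Set.diff_singleton_eq_self; simp
  have hslope : Filter.Tendsto (slope (fun t => t * G t) t₀)
      (nhdsWithin t₀ (Set.Iio t₀)) (nhds (1 * G t₀ + t₀ * G' t₀)) := by
    have := hasDerivWithinAt_iff_tendsto_slope.mp (hd.hasDerivWithinAt (s := Set.Iio t₀))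
    rwa [hdiff] at this
  have hnn : 0 ≤ 1 * G t₀ + t₀ * G' t₀ := by
    refine ge_of_tendsto hslope ?_
    filter_upwards [Ioo_mem_nhdsLT_of_mem (Set.mem_Ioc.mpr ⟨ht₀pos, le_refl t₀⟩)] with t ht
    rw [slope_def_field]
    have h1 : t * G t - t₀ * G t₀ ≤ 0 := by
      have := hless t ht.1 ht.2; linarith
    have h2 : t - t₀ ≤ 0 := by linarith [ht.2]
    exact div_nonneg_iff.mpr (Or.inr ⟨h1, h2⟩)
  -- the ODE inequality at t₀
  have hG' : G' t₀ ≤ C * t₀⁻¹ ^ 2 - (G t₀) ^ 2 / K ^ 2 :=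
    hineq t₀ ⟨ht₀pos, ht₀T⟩ hGpos
  have hinv : t₀ * t₀⁻¹ = 1 := mul_inv_cancel₀ ht₀pos.ne'
  have h6 : t₀ * G' t₀ ≤ t₀ * (C * t₀⁻¹ ^ 2 - (G t₀) ^ 2 / K ^ 2) :=
    mul_le_mul_of_nonneg_left hG' ht₀pos.le
  have h7 : 0 ≤ G t₀ + t₀ * (C * t₀⁻¹ ^ 2 - (G t₀) ^ 2 / K ^ 2) := by linarith
  have h10 : t₀ * (C * t₀⁻¹ ^ 2 - (G t₀) ^ 2 / K ^ 2)
      = C / t₀ - t₀ * (G t₀) ^ 2 / K ^ 2 := by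
    field_simp
  have h11 : 0 ≤ G t₀ + (C / t₀ - t₀ * (G t₀) ^ 2 / K ^ 2) := by rw [← h10]; exact h7
  have h13 : (G t₀ + (C / t₀ - t₀ * (G t₀) ^ 2 / K ^ 2)) * (t₀ * K ^ 2)
      = t₀ * G t₀ * K ^ 2 + C * K ^ 2 - (t₀ * G t₀) ^ 2 := by
    field_simp
    ring
  have h12 : 0 ≤ (G t₀ + (C / t₀ - t₀ * (G t₀) ^ 2 / K ^ 2)) * (t₀ * K ^ 2) :=
    mul_nonneg h11 (by positivity)
  have key : (t₀ * G t₀) ^ 2 ≤ K ^ 2 * (t₀ * G t₀) + C * K ^ 2 := by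
    rw [h13] at h12; linarith
  -- final contradiction: φ₀ := t₀ * G t₀ > M, but x² ≤ K²x + CK² forces x ≤ M
  have hφM : M < t₀ * G t₀ := lt_of_lt_of_le hM'M hφ₀
  have hle : t₀ * G t₀ ≤ M := by
    have := quad_root_bound C K (t₀ * G t₀) hC hK (by linarith)
    simpa [hMdef, hs] using this
  linarith
end

section
/- Let A : [t₀, t₁] → Sym(n, ℝ) be a C¹ family of symmetric n×n real matrices with A(t₀) positive definite. Suppose that for every t ∈ (t₀, t₁] and every unit vector v ∈ ℝⁿ, if A(t) is positive semidefinite and v^T A(t) v = 0, then v^T A'(t) v > 0. Then A(t) is positive definite for all t ∈ [t₀, t₁]. -/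
set_option maxHeartbeats 1000000


open Matrix

private lemma quad_hasDerivAt {n : ℕ} (A A' : ℝ → Matrix (Fin n) (Fin n) ℝ) (τ : ℝ)
    (h : ∀ i j, HasDerivAt (fun s => A s i j) (A' τ i j) τ) (v : Fin n → ℝ) :
    HasDerivAt (fun s => v ⬝ᵥ (A s *ᵥ v)) (v ⬝ᵥ (A' τ *ᵥ v)) τ := by
  have h2 : ∀ i j, HasDerivAt (fun s => v i * (A s i j * v j)) (v i * (A' τ i j * v j)) τ :=
    fun i j => ((h i j).mul_const (v j)).const_mul (v i)
  have := HasDerivAt.fun_sum (u := Finset.univ)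
    (fun i _ => HasDerivAt.fun_sum (u := Finset.univ) (fun j _ => h2 i j))
  simpa [dotProduct, mulVec, Finset.mul_sum] using this

theorem stmt_15 (n : ℕ) (t₀ t₁ : ℝ) (ht : t₀ ≤ t₁)
    (A A' : ℝ → Matrix (Fin n) (Fin n) ℝ)
    (hsymm : ∀ t ∈ Set.Icc t₀ t₁, (A t).IsSymm)
    (hC1 : ∀ i j, ContinuousOn (fun t => A' t i j) (Set.Icc t₀ t₁))
    (hderiv : ∀ t ∈ Set.Icc t₀ t₁, ∀ i j, HasDerivAt (fun s => A s i j) (A' t i j) t)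
    (hpos0 : (A t₀).PosDef)
    (hkey : ∀ t ∈ Set.Ioc t₀ t₁, ∀ v : EuclideanSpace ℝ (Fin n), ‖v‖ = 1 →
      (A t).PosSemidef → v ⬝ᵥ ((A t) *ᵥ v) = 0 → 0 < v ⬝ᵥ ((A' t) *ᵥ v)) :
    ∀ t ∈ Set.Icc t₀ t₁, (A t).PosDef := by
  classical
  have hherm : ∀ t ∈ Set.Icc t₀ t₁, (A t).IsHermitian := by
    intro t htmem
    rw [Matrix.IsHermitian, Matrix.conjTranspose_eq_transpose_of_trivial]
    exact hsymm t htmem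
  by_contra hcon
  push_neg at hcon
  obtain ⟨t', ht', hnot⟩ := hcon
  set C : Set ℝ := {t | t ∈ Set.Icc t₀ t₁ ∧ ¬ (A t).PosDef} with hCdef
  have hCne : C.Nonempty := ⟨t', ht', hnot⟩
  have hCbdd : BddBelow C := ⟨t₀, fun x hx => hx.1.1⟩
  set τ := sInf C with hτdef
  have hτmem : τ ∈ Set.Icc t₀ t₁ :=
    ⟨le_csInf hCne (fun x hx => hx.1.1), le_trans (csInf_le hCbdd ⟨ht', hnot⟩) ht'.2⟩
  -- positive definiteness strictly below τ
  have hposlt : ∀ t ∈ Set.Ico t₀ τ, (A t).PosDef := by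
    intro t htm
    by_contra h
    exact absurd (csInf_le hCbdd ⟨⟨htm.1, le_trans htm.2.le hτmem.2⟩, h⟩) (not_le.mpr htm.2)
  clear_value τ
  -- a sequence in C tending to τ
  obtain ⟨ts, -, hts_tendsto, hts_mem⟩ := exists_seq_tendsto_sInf hCne hCbdd
  rw [← hτdef] at hts_tendsto
  -- unit vectors with nonpositive quadratic form at each ts k
  have hx : ∀ k, ∃ u : EuclideanSpace ℝ (Fin n), ‖u‖ = 1 ∧
      (u : Fin n → ℝ) ⬝ᵥ (A (ts k) *ᵥ (u : Fin n → ℝ)) ≤ 0 := by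
    intro k
    have hnd := (hts_mem k).2
    rw [Matrix.posDef_iff_dotProduct_mulVec] at hnd
    push_neg at hnd
    obtain ⟨x, hx0, hxle⟩ := hnd (hherm (ts k) (hts_mem k).1)
    rw [star_trivial] at hxle
    set y : EuclideanSpace ℝ (Fin n) := (WithLp.equiv 2 (Fin n → ℝ)).symm x with hy
    have hy0 : y ≠ 0 := by
      simpa [hy] using hx0
    have hny : ‖y‖ ≠ 0 := norm_ne_zero_iff.mpr hy0
    refine ⟨‖y‖⁻¹ • y, ?_, ?_⟩
    · rw [norm_smul, norm_inv, norm_norm, inv_mul_cancel₀ hny]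
    · have hcoe : ((‖y‖⁻¹ • y : EuclideanSpace ℝ (Fin n)) : Fin n → ℝ) = ‖y‖⁻¹ • x := rfl
      rw [hcoe, smul_dotProduct, mulVec_smul, dotProduct_smul]
      have h2 : (0:ℝ) ≤ ‖y‖⁻¹ := inv_nonneg.mpr (norm_nonneg _)
      exact mul_nonpos_of_nonneg_of_nonpos h2
        (mul_nonpos_of_nonneg_of_nonpos h2 hxle)
  choose u hu1 hu2 using hx
  -- compactness of the sphere: extract a convergent subsequence
  have husphere : ∀ k, u k ∈ Metric.sphere (0 : EuclideanSpace ℝ (Fin n)) 1 := by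
    intro k; rw [mem_sphere_zero_iff_norm]; exact hu1 k
  obtain ⟨v₀, hv₀s, φ, hφ, hvtend⟩ := (isCompact_sphere (0 : EuclideanSpace ℝ (Fin n)) 1).tendsto_subseq husphere
  have hv₀norm : ‖v₀‖ = 1 := mem_sphere_zero_iff_norm.mp hv₀s
  have hv₀ne : v₀ ≠ 0 := by
    intro h; rw [h, norm_zero] at hv₀norm; exact zero_ne_one hv₀norm
  -- continuity of entries at τ
  have hAc : ∀ i j, ContinuousAt (fun t => A t i j) τ :=
    fun i j => (hderiv τ hτmem i j).continuousAt
  -- joint continuity of the quadratic form at (τ, v₀)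
  have hQc : ContinuousAt (fun p : ℝ × (Fin n → ℝ) =>
      p.2 ⬝ᵥ (A p.1 *ᵥ p.2)) (τ, (v₀ : Fin n → ℝ)) := by
    have : ∀ i j, ContinuousAt (fun p : ℝ × (Fin n → ℝ) =>
        p.2 i * (A p.1 i j * p.2 j)) (τ, (v₀ : Fin n → ℝ)) := by
      intro i j
      have h1 : ContinuousAt (fun p : ℝ × (Fin n → ℝ) => A p.1 i j) (τ, (v₀ : Fin n → ℝ)) :=
        ContinuousAt.comp (f := Prod.fst) (x := (τ, (v₀ : Fin n → ℝ))) (hAc i j) continuousAt_fst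
      have h2 : ContinuousAt (fun p : ℝ × (Fin n → ℝ) => p.2 i) (τ, (v₀ : Fin n → ℝ)) :=
        ((continuous_apply i).comp continuous_snd).continuousAt
      have h3 : ContinuousAt (fun p : ℝ × (Fin n → ℝ) => p.2 j) (τ, (v₀ : Fin n → ℝ)) :=
        ((continuous_apply j).comp continuous_snd).continuousAt
      exact h2.mul (h1.mul h3)
    have hsum : ContinuousAt (fun p : ℝ × (Fin n → ℝ) =>
        ∑ i, ∑ j, p.2 i * (A p.1 i j * p.2 j)) (τ, (v₀ : Fin n → ℝ)) := by
      apply tendsto_finset_sum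
      intro i _
      exact tendsto_finset_sum _ (fun j _ => this i j)
    convert hsum using 1
    funext p
    simp [dotProduct, mulVec, Finset.mul_sum]
  -- the subsequence (ts ∘ φ, u ∘ φ) tends to (τ, v₀)
  have htφ : Filter.Tendsto (fun k => ts (φ k)) Filter.atTop (nhds τ) :=
    hts_tendsto.comp hφ.tendsto_atTop
  have hvtend' : Filter.Tendsto (fun k => ((u (φ k) : EuclideanSpace ℝ (Fin n)) : Fin n → ℝ))
      Filter.atTop (nhds (v₀ : Fin n → ℝ)) := by
    have : Continuous (fun w : EuclideanSpace ℝ (Fin n) => (w : Fin n → ℝ)) :=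
      PiLp.continuous_ofLp 2 (fun _ : Fin n => ℝ)
    exact (this.continuousAt.tendsto).comp hvtend
  have hpair : Filter.Tendsto (fun k => ((ts (φ k), ((u (φ k) : EuclideanSpace ℝ (Fin n)) : Fin n → ℝ)) : ℝ × (Fin n → ℝ)))
      Filter.atTop (nhds (τ, (v₀ : Fin n → ℝ))) := htφ.prodMk_nhds hvtend'
  have hQtend : Filter.Tendsto
      (fun k => ((u (φ k) : EuclideanSpace ℝ (Fin n)) : Fin n → ℝ) ⬝ᵥ
        (A (ts (φ k)) *ᵥ ((u (φ k) : EuclideanSpace ℝ (Fin n)) : Fin n → ℝ)))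
      Filter.atTop (nhds ((v₀ : Fin n → ℝ) ⬝ᵥ (A τ *ᵥ (v₀ : Fin n → ℝ)))) :=
    (hQc.tendsto).comp hpair
  have hqτ_le : (v₀ : Fin n → ℝ) ⬝ᵥ (A τ *ᵥ (v₀ : Fin n → ℝ)) ≤ 0 :=
    le_of_tendsto hQtend (Filter.Eventually.of_forall (fun k => hu2 (φ k)))
  -- A τ is positive semidefinite
  have hsemi : (A τ).PosSemidef := by
    refine Matrix.PosSemidef.of_dotProduct_mulVec_nonneg (hherm τ hτmem) ?_
    intro x
    rw [star_trivial]
    rcases eq_or_lt_of_le hτmem.1 with heq | hlt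
    · rw [← heq]
      have := hpos0.posSemidef.dotProduct_mulVec_nonneg x
      rwa [star_trivial] at this
    · have hne : (nhdsWithin τ (Set.Ico t₀ τ)).NeBot := by
        rw [← mem_closure_iff_nhdsWithin_neBot, closure_Ico hlt.ne]
        exact ⟨hτmem.1, le_refl τ⟩
      have hcont : ContinuousAt (fun t => x ⬝ᵥ (A t *ᵥ x)) τ :=
        (quad_hasDerivAt A A' τ (hderiv τ hτmem) x).continuousAt
      have htt : Filter.Tendsto (fun t => x ⬝ᵥ (A t *ᵥ x)) (nhdsWithin τ (Set.Ico t₀ τ))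
          (nhds (x ⬝ᵥ (A τ *ᵥ x))) := (hcont.continuousWithinAt (s := Set.Ico t₀ τ)).tendsto
      refine ge_of_tendsto htt ?_
      filter_upwards [self_mem_nhdsWithin] with t htm
      have := (hposlt t htm).posSemidef.dotProduct_mulVec_nonneg x
      rwa [star_trivial] at this
  -- the quadratic form vanishes at τ in direction v₀
  have hq0 : (v₀ : Fin n → ℝ) ⬝ᵥ (A τ *ᵥ (v₀ : Fin n → ℝ)) = 0 := by
    have := hsemi.dotProduct_mulVec_nonneg (v₀ : Fin n → ℝ)
    rw [star_trivial] at this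
    exact le_antisymm hqτ_le this
  -- τ > t₀
  have hlt : t₀ < τ := by
    rcases eq_or_lt_of_le hτmem.1 with heq | hlt
    · exfalso
      have h2 := hpos0.dotProduct_mulVec_pos (x := (v₀ : Fin n → ℝ)) (fun h => hv₀ne (by simpa using h))
      rw [star_trivial, heq, hq0] at h2
      exact lt_irrefl 0 h2
    · exact hlt
  -- key hypothesis applies
  have hd : 0 < (v₀ : Fin n → ℝ) ⬝ᵥ (A' τ *ᵥ (v₀ : Fin n → ℝ)) :=
    hkey τ ⟨hlt, hτmem.2⟩ v₀ hv₀norm hsemi hq0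
  -- but the derivative must be nonpositive at τ
  have hg : HasDerivAt (fun s => (v₀ : Fin n → ℝ) ⬝ᵥ (A s *ᵥ (v₀ : Fin n → ℝ)))
      ((v₀ : Fin n → ℝ) ⬝ᵥ (A' τ *ᵥ (v₀ : Fin n → ℝ))) τ :=
    quad_hasDerivAt A A' τ (hderiv τ hτmem) _
  rw [hasDerivAt_iff_tendsto_slope] at hg
  have hsub : Set.Ico t₀ τ ⊆ {τ}ᶜ := fun x hx => ne_of_lt hx.2
  have hg' : Filter.Tendsto (slope (fun s => (v₀ : Fin n → ℝ) ⬝ᵥ (A s *ᵥ (v₀ : Fin n → ℝ))) τ)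
      (nhdsWithin τ (Set.Ico t₀ τ))
      (nhds ((v₀ : Fin n → ℝ) ⬝ᵥ (A' τ *ᵥ (v₀ : Fin n → ℝ)))) :=
    hg.mono_left (nhdsWithin_mono τ hsub)
  have hne : (nhdsWithin τ (Set.Ico t₀ τ)).NeBot := by
    rw [← mem_closure_iff_nhdsWithin_neBot, closure_Ico hlt.ne]
    exact ⟨hτmem.1, le_refl τ⟩
  have hle : (v₀ : Fin n → ℝ) ⬝ᵥ (A' τ *ᵥ (v₀ : Fin n → ℝ)) ≤ 0 := by
    refine le_of_tendsto hg' ?_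
    filter_upwards [self_mem_nhdsWithin] with t htm
    have hgt : 0 ≤ (v₀ : Fin n → ℝ) ⬝ᵥ (A t *ᵥ (v₀ : Fin n → ℝ)) := by
      have := (hposlt t htm).posSemidef.dotProduct_mulVec_nonneg (v₀ : Fin n → ℝ)
      rwa [star_trivial] at this
    rw [slope_def_field, hq0, sub_zero]
    exact div_nonpos_iff.mpr (Or.inl ⟨hgt, sub_nonpos.mpr htm.2.le⟩)
  exact absurd hd (not_lt.mpr hle)
end
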